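/- (Proposition 2(a)) Let H ≥ 2 and N₀ ≥ 1 with N = H·N₀, and index the units so that the h-th block (whole-plot) is Ω_h = {(h−1)N₀+1, …, hN₀}; regard any N×N matrix as an H×H array of N₀×N₀ blocks. Let Q = (q_{ii*}) be an N×N real symmetric positive semidefinite matrix with all row sums zero and all diagonal entries 1/N². Then the following are equivalent: (i) q_{ii*} = 1/N² for all units i, i* lying in the same block Ω_h; (ii) Q = Q₁ ⊗ (𝟙₀𝟙₀′), where 𝟙₀ is the N₀×1 all-ones vector and Q₁ is an H×H real symmetric positive semidefinite matrix with all row sums zero and all diagonal entries equal to 1/N². (Condition (i) is the second-order assignment probability condition (SAP) specialized to the split-plot assignment mechanism.) -/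

import Mathlib

open Finset Matrix

/-- Proposition 2(a): with units indexed by pairs `(h, j)` (whole-plot `h`,
sub-plot `j`), let `Q` be an `N×N` (`N = H·N₀`) real symmetric positive
semidefinite matrix with all row sums zero and all diagonal entries `1/N²`.
Then `Q` has all entries within each diagonal (whole-plot) block equal to
`1/N²` — the SAP condition for the split-plot assignment mechanism — if and
only if `Q = Q₁ ⊗ (𝟙₀𝟙₀′)` for some `H×H` real symmetric positive
semidefinite matrix `Q₁` with all row sums zero and all diagonal entries
`1/N²`. -/
theorem proposition2a {H N₀ N : ℕ} (hH : 2 ≤ H) (hN₀ : 1 ≤ N₀) (hN : N = H * N₀)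
    (Q : Matrix (Fin H × Fin N₀) (Fin H × Fin N₀) ℝ) (hQ : Q.PosSemidef)
    (hrow : ∀ i, ∑ j, Q i j = 0) (hdiag : ∀ i, Q i i = 1 / (N : ℝ) ^ 2) :
    (∀ (h : Fin H) (j j' : Fin N₀), Q (h, j) (h, j') = 1 / (N : ℝ) ^ 2) ↔
    (∃ Q₁ : Matrix (Fin H) (Fin H) ℝ, Q₁.PosSemidef ∧
      (∀ h, ∑ h', Q₁ h h' = 0) ∧ (∀ h, Q₁ h h = 1 / (N : ℝ) ^ 2) ∧
      Q = Matrix.kroneckerMap (· * ·) Q₁ (Matrix.of fun _ _ => (1 : ℝ))) := by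
  have hsym : ∀ a b, Q a b = Q b a := by
    intro a b
    simpa using hQ.isHermitian.apply b a
  constructor
  · intro hsap
    have j0 : Fin N₀ := ⟨0, hN₀⟩
    -- columns within the same block are equal
    have col_eq : ∀ (h : Fin H) (j j' : Fin N₀) (i), Q i (h, j) = Q i (h, j') := by
      intro h j j' i
      set x : Fin H × Fin N₀ → ℝ :=
        Pi.single (h, j) 1 - Pi.single (h, j') 1 with hx
      have hq0 : star x ⬝ᵥ Q *ᵥ x = 0 := by
        have hsx : star x = x := by
          funext i; simp [hx]
        rw [hsx, hx]
        simp [Matrix.mulVec_sub, Matrix.mulVec_single, sub_dotProduct,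
          single_dotProduct, hsap]
      have hmv : Q *ᵥ x = 0 := (hQ.dotProduct_mulVec_zero_iff x).mp hq0
      have := congrFun hmv i
      simp only [hx, Matrix.mulVec_sub, Matrix.mulVec_single, mul_one,
        Pi.sub_apply, Pi.zero_apply, Pi.smul_apply, MulOpposite.op_one, one_smul,
        Matrix.col_apply] at this
      linarith
    refine ⟨fun h h' => Q (h, j0) (h', j0), ?_, ?_, ?_, ?_⟩
    · refine Matrix.posSemidef_iff_dotProduct_mulVec.mpr ?_
      constructor
      · ext h h'
        show star (Q (h', j0) (h, j0)) = Q (h, j0) (h', j0)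
        simp [Matrix.conjTranspose_apply, hsym]
      · intro v
        have key : ∀ (h : Fin H) (j : Fin N₀) (h' : Fin H) (j' : Fin N₀),
            Q (h, j) (h', j') = Q (h, j0) (h', j0) := by
          intro h j h' j'
          rw [col_eq h' j' j0, hsym, col_eq h j j0, hsym]
        have h0 := hQ.dotProduct_mulVec_nonneg (fun p : Fin H × Fin N₀ => v p.1)
        have hcomp : star (fun p : Fin H × Fin N₀ => v p.1) ⬝ᵥ
            Q *ᵥ (fun p => v p.1)
            = (N₀ : ℝ) ^ 2 *
              (star v ⬝ᵥ (Matrix.of fun h h' => Q (h, j0) (h', j0)) *ᵥ v) := by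
          simp only [dotProduct, Matrix.mulVec, Pi.star_apply, star_trivial,
            Matrix.of_apply]
          rw [Fintype.sum_prod_type]
          have inner : ∀ p : Fin H × Fin N₀,
              (∑ q : Fin H × Fin N₀, Q p q * v q.1)
              = (N₀ : ℝ) * ∑ h' : Fin H, Q (p.1, j0) (h', j0) * v h' := by
            intro p
            rw [Fintype.sum_prod_type]
            rw [Finset.mul_sum]
            refine Finset.sum_congr rfl fun h' _ => ?_
            have : ∀ j' : Fin N₀, Q p (h', j') * v h'
                = Q (p.1, j0) (h', j0) * v h' := by
              intro j'
              rw [show p = (p.1, p.2) from rfl, key]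
            rw [Finset.sum_congr rfl fun j' _ => this j']
            simp [Finset.sum_const]
          have : ∀ h : Fin H, ∀ j : Fin N₀,
              v h * ∑ q : Fin H × Fin N₀, Q (h, j) q * v q.1
              = (N₀ : ℝ) * (v h * ∑ h' : Fin H, Q (h, j0) (h', j0) * v h') := by
            intro h j
            rw [inner (h, j)]; ring
          rw [Finset.sum_congr rfl fun h _ => Finset.sum_congr rfl fun j _ => this h j]
          simp [Finset.sum_const, Finset.mul_sum]
          ring_nf
        rw [hcomp] at h0
        have hN₀pos : (0:ℝ) < (N₀ : ℝ) ^ 2 := by positivity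
        show 0 ≤ star v ⬝ᵥ (Matrix.of fun h h' => Q (h, j0) (h', j0)) *ᵥ v
        nlinarith [h0]
    · intro h
      have hr := hrow (h, j0)
      rw [Fintype.sum_prod_type] at hr
      have : ∀ h' : Fin H, ∑ j' : Fin N₀, Q (h, j0) (h', j')
          = (N₀ : ℝ) * Q (h, j0) (h', j0) := by
        intro h'
        rw [Finset.sum_congr rfl fun j' _ => col_eq h' j' j0 (h, j0)]
        simp [Finset.sum_const]
      rw [Finset.sum_congr rfl fun h' _ => this h', ← Finset.mul_sum] at hr
      have hN₀ne : (N₀ : ℝ) ≠ 0 := by positivity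
      exact (mul_eq_zero.mp hr).resolve_left hN₀ne
    · intro h
      exact hdiag (h, j0)
    · ext ⟨h, j⟩ ⟨h', j'⟩
      show Q (h, j) (h', j') = Q (h, j0) (h', j0) * 1
      rw [mul_one]
      rw [col_eq h' j' j0, hsym, col_eq h j j0, hsym]
  · rintro ⟨Q₁, hQ₁psd, hQ₁row, hQ₁diag, rfl⟩
    intro h j j'
    simp [Matrix.kroneckerMap_apply, hQ₁diag h]
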